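/- In the triangular lattice, a vertex that does not lie on any triangle (3-clique with both its other vertices among a given vertex set V, within the induced subgraph) of an induced subgraph G has degree at most 3 in G. -/

import Mathlib

def TriLattice : SimpleGraph (ℤ × ℤ) where
  Adj u v := (v.1 - u.1, v.2 - u.2) ∈
    ({(1,0), (-1,0), (0,1), (0,-1), (1,-1), (-1,1)} : Set (ℤ × ℤ))
  symm := by
    constructor
    intro u v h
    simp only [Set.mem_insert_iff, Set.mem_singleton_iff, Prod.mk.injEq] at *
    omega
  loopless := by
    constructor
    intro u h
    simp only [Set.mem_insert_iff, Set.mem_singleton_iff, Prod.mk.injEq] at h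
    omega

instance : DecidableRel TriLattice.Adj := fun u v =>
  decidable_of_iff ((v.1 - u.1, v.2 - u.2) ∈
    ([(1,0), (-1,0), (0,1), (0,-1), (1,-1), (-1,1)] : List (ℤ × ℤ)))
    (by simp [TriLattice])

/-- The six directions in cyclic order. -/
def triDir : Fin 6 → ℤ × ℤ
  | 0 => (1,0) | 1 => (1,-1) | 2 => (0,-1) | 3 => (-1,0) | 4 => (-1,1) | 5 => (0,1)

lemma c6_indep_card (T : Finset (Fin 6)) (h : ∀ i : Fin 6, ¬(i ∈ T ∧ i + 1 ∈ T)) :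
    T.card ≤ 3 := by
  revert h
  revert T
  decide

lemma adj_iff_dir (v u : ℤ × ℤ) :
    TriLattice.Adj v u ↔ ∃ i : Fin 6, u = (v.1 + (triDir i).1, v.2 + (triDir i).2) := by
  constructor
  · intro h
    simp only [TriLattice, Set.mem_insert_iff, Set.mem_singleton_iff, Prod.mk.injEq] at h
    rcases h with h | h | h | h | h | h
    · exact ⟨0, by simp [triDir, Prod.ext_iff]; omega⟩
    · exact ⟨3, by simp [triDir, Prod.ext_iff]; omega⟩
    · exact ⟨5, by simp [triDir, Prod.ext_iff]; omega⟩
    · exact ⟨2, by simp [triDir, Prod.ext_iff]; omega⟩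
    · exact ⟨1, by simp [triDir, Prod.ext_iff]; omega⟩
    · exact ⟨4, by simp [triDir, Prod.ext_iff]; omega⟩
  · rintro ⟨i, rfl⟩
    simp only [TriLattice, Set.mem_insert_iff, Set.mem_singleton_iff, Prod.mk.injEq]
    fin_cases i <;> simp [triDir] <;> omega

/-- A vertex not on any triangle of an induced subgraph of the triangular lattice
has degree at most 3 in that subgraph. -/
theorem degree_le_three_of_no_triangle (V : Finset (ℤ × ℤ)) (v : ℤ × ℤ) (hv : v ∈ V)
    (hnt : ¬ ∃ u ∈ V, ∃ w ∈ V,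
      TriLattice.Adj v u ∧ TriLattice.Adj v w ∧ TriLattice.Adj u w) :
    (V.filter (fun u => TriLattice.Adj v u)).card ≤ 3 := by
  classical
  set c : Fin 6 → ℤ × ℤ := fun i => (v.1 + (triDir i).1, v.2 + (triDir i).2) with hc
  have htinj : Function.Injective triDir := by decide
  have hcinj : Function.Injective c := by
    intro i j hij
    simp only [hc, Prod.mk.injEq] at hij
    exact htinj (Prod.ext (by omega) (by omega))
  set T : Finset (Fin 6) := Finset.univ.filter (fun i => c i ∈ V) with hT
  have heq : V.filter (fun u => TriLattice.Adj v u) = T.image c := by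
    ext u
    simp only [Finset.mem_filter, Finset.mem_image, hT, Finset.mem_univ, true_and]
    constructor
    · rintro ⟨huV, hadj⟩
      obtain ⟨i, rfl⟩ := (adj_iff_dir v u).mp hadj
      exact ⟨i, huV, rfl⟩
    · rintro ⟨i, hiV, rfl⟩
      exact ⟨hiV, (adj_iff_dir v _).mpr ⟨i, rfl⟩⟩
  rw [heq, Finset.card_image_of_injective _ hcinj]
  apply c6_indep_card
  intro i ⟨hi, hi1⟩
  simp only [hT, Finset.mem_filter, Finset.mem_univ, true_and] at hi hi1
  apply hnt
  refine ⟨c i, hi, c (i+1), hi1, (adj_iff_dir v _).mpr ⟨i, rfl⟩,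
    (adj_iff_dir v _).mpr ⟨i+1, rfl⟩, ?_⟩
  rw [adj_iff_dir]
  fin_cases i
  · exact ⟨2, by simp [hc, triDir, Prod.ext_iff]⟩
  · exact ⟨3, by simp [hc, triDir, Prod.ext_iff]⟩
  · exact ⟨4, by simp [hc, triDir, Prod.ext_iff]⟩
  · exact ⟨5, by simp [hc, triDir, Prod.ext_iff]⟩
  · exact ⟨0, by simp [hc, triDir, Prod.ext_iff]⟩
  · exact ⟨1, by simp [hc, triDir, Prod.ext_iff]⟩
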